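/- Let g be a finite-dimensional real Lie algebra with universal enveloping algebra U(g), and fix a norm λ : U(g) → ℝ (a norm on the underlying vector space, with no multiplicativity assumed). Then there exists a norm λ' on U(g) such that ‖D · D'‖_λ ≤ ‖D‖_{λ'} · ‖D'‖_{λ'} for all D, D' ∈ U(g). -/

import Mathlib

/-- A norm on the underlying real vector space of `U` (no multiplicativity assumed). -/
def IsVectorNorm (U : Type*) [AddCommGroup U] [Module ℝ U] (n : U → ℝ) : Prop :=
  (∀ x y : U, n (x + y) ≤ n x + n y) ∧
  (∀ (c : ℝ) (x : U), n (c • x) = |c| * n x) ∧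
  (∀ x : U, x ≠ 0 → 0 < n x)

theorem IsVectorNorm.zero' {U : Type*} [AddCommGroup U] [Module ℝ U] {n : U → ℝ}
    (h : IsVectorNorm U n) : n 0 = 0 := by
  have := h.2.1 0 0
  simpa using this

theorem IsVectorNorm.sum_le {U : Type*} [AddCommGroup U] [Module ℝ U] {n : U → ℝ}
    (h : IsVectorNorm U n) {α : Type*} (s : Finset α) (f : α → U) :
    n (∑ i ∈ s, f i) ≤ ∑ i ∈ s, n (f i) := by
  classical
  induction s using Finset.induction with
  | empty => simp [h.zero']
  | insert _ _ hni ih =>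
    rw [Finset.sum_insert hni, Finset.sum_insert hni]
    exact (h.1 _ _).trans (by linarith)

/-- For a finite-dimensional real Lie algebra `g` and any norm `λ` on the vector space
`U(g)`, there is a norm `λ'` on `U(g)` with `‖D·D'‖_λ ≤ ‖D‖_{λ'}·‖D'‖_{λ'}` for all
`D, D' ∈ U(g)`. -/
theorem exists_submultiplicative_bound
    (L : Type*) [LieRing L] [LieAlgebra ℝ L] [FiniteDimensional ℝ L]
    (lam : UniversalEnvelopingAlgebra ℝ L → ℝ)
    (hlam : IsVectorNorm (UniversalEnvelopingAlgebra ℝ L) lam) :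
    ∃ lam' : UniversalEnvelopingAlgebra ℝ L → ℝ,
      IsVectorNorm (UniversalEnvelopingAlgebra ℝ L) lam' ∧
      ∀ D D' : UniversalEnvelopingAlgebra ℝ L, lam (D * D') ≤ lam' D * lam' D' := by
  classical
  obtain ⟨hadd, hsmul, hpos⟩ := hlam
  have hlam' : IsVectorNorm (UniversalEnvelopingAlgebra ℝ L) lam := ⟨hadd, hsmul, hpos⟩
  -- a countable spanning family: products of images of basis vectors of L
  set m := Module.finrank ℝ L with hm
  set bL := Module.finBasis ℝ L with hbL
  set f : List (Fin m) → (UniversalEnvelopingAlgebra ℝ L) :=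
    (fun l => (l.map (fun i => UniversalEnvelopingAlgebra.ι ℝ (bL i))).prod) with hf
  have hspan : Submodule.span ℝ (Set.range f) = ⊤ := by
    rw [Submodule.eq_top_iff']
    intro u
    obtain ⟨t, rfl⟩ :=
      RingCon.mkₐ_surjective (α := ℝ) _ u
    show (UniversalEnvelopingAlgebra.mkAlgHom ℝ L) t ∈ _
    induction t using TensorAlgebra.induction with
    | algebraMap r =>
      have h1 : (1 : (UniversalEnvelopingAlgebra ℝ L)) ∈ Set.range f := ⟨[], by simp [hf]⟩
      have h2 : (UniversalEnvelopingAlgebra.mkAlgHom ℝ L) (algebraMap ℝ _ r)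
          = r • (1 : (UniversalEnvelopingAlgebra ℝ L)) := by
        rw [AlgHom.commutes, Algebra.algebraMap_eq_smul_one]
      rw [h2]
      exact Submodule.smul_mem _ _ (Submodule.subset_span h1)
    | ι x =>
      have h2 : (UniversalEnvelopingAlgebra.mkAlgHom ℝ L) (TensorAlgebra.ι ℝ x)
          = UniversalEnvelopingAlgebra.ι ℝ x := rfl
      rw [h2]
      have hx : UniversalEnvelopingAlgebra.ι ℝ x
          = ∑ i, bL.repr x i • UniversalEnvelopingAlgebra.ι ℝ (bL i) := by
        letI : LieRing (UniversalEnvelopingAlgebra ℝ L) := LieRing.ofAssociativeRing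
        have : UniversalEnvelopingAlgebra.ι ℝ x
            = (UniversalEnvelopingAlgebra.ι ℝ (L := L)).toLinearMap x := rfl
        rw [this]
        conv_lhs => rw [← bL.sum_repr x]
        rw [map_sum]
        exact Finset.sum_congr rfl fun i _ => by rw [LinearMap.map_smul]; rfl
      rw [hx]
      refine Submodule.sum_mem _ fun i _ => Submodule.smul_mem _ _ ?_
      exact Submodule.subset_span ⟨[i], by simp [hf]⟩
    | mul a b ha hb =>
      rw [map_mul]
      have h2 := Submodule.mul_mem_mul ha hb
      rw [Submodule.span_mul_span] at h2
      refine Submodule.span_mono ?_ h2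
      rintro z ⟨_, ⟨l1, rfl⟩, _, ⟨l2, rfl⟩, rfl⟩
      exact ⟨l1 ++ l2, by simp [hf]⟩
    | add a b ha hb =>
      rw [map_add]
      exact Submodule.add_mem _ ha hb
  -- hence `(UniversalEnvelopingAlgebra ℝ L)` has countable dimension and a countable basis
  have hrank : Module.rank ℝ (UniversalEnvelopingAlgebra ℝ L) ≤ Cardinal.aleph0 := by
    have hc : Countable ↑(Set.range f) := (Set.countable_range f).to_subtype
    have h1 : Module.rank ℝ ↥(Submodule.span ℝ (Set.range f)) ≤ Cardinal.aleph0 :=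
      (rank_span_le _).trans (Cardinal.mk_le_aleph0)
    rwa [hspan, rank_top] at h1
  set b := Module.Basis.ofVectorSpace ℝ (UniversalEnvelopingAlgebra ℝ L) with hb
  have hcnt : Countable (Module.Basis.ofVectorSpaceIndex ℝ (UniversalEnvelopingAlgebra ℝ L)) := by
    rw [← Cardinal.mk_le_aleph0_iff, b.mk_eq_rank'']
    exact hrank
  obtain ⟨e, he⟩ := Countable.exists_injective_nat (Module.Basis.ofVectorSpaceIndex ℝ (UniversalEnvelopingAlgebra ℝ L))
  -- enumerate the basis along `e`
  set g : ℕ → (UniversalEnvelopingAlgebra ℝ L) := fun k => if h : ∃ i, e i = k then b h.choose else 0 with hgdef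
  have hg : ∀ i, g (e i) = b i := by
    intro i
    have h : ∃ j, e j = e i := ⟨i, rfl⟩
    simp only [hgdef, dif_pos h]
    congr 1
    exact he h.choose_spec
  -- the weights
  have hne : ∀ k : ℕ, ((Finset.range (k+1)) ×ˢ (Finset.range (k+1))).Nonempty :=
    fun k => ⟨(0, 0), by simp⟩
  set W : ℕ → ℝ := fun k => max 1
      (((Finset.range (k+1)) ×ˢ (Finset.range (k+1))).sup' (hne k)
        (fun p => lam (g p.1 * g p.2))) with hWdef
  set w : (Module.Basis.ofVectorSpaceIndex ℝ (UniversalEnvelopingAlgebra ℝ L)) → ℝ := fun i => W (e i) with hwdef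
  have hW1 : ∀ k, (1 : ℝ) ≤ W k := fun k => le_max_left _ _
  have hw1 : ∀ i, (1 : ℝ) ≤ w i := fun i => hW1 _
  have hwpos : ∀ i, (0 : ℝ) < w i := fun i => lt_of_lt_of_le one_pos (hw1 i)
  have hkey : ∀ i j, lam (b i * b j) ≤ w i * w j := by
    intro i j
    have hleW : lam (b i * b j) ≤ W (max (e i) (e j)) := by
      have hmem : ((e i : ℕ), (e j : ℕ)) ∈
          (Finset.range (max (e i) (e j) + 1)) ×ˢ (Finset.range (max (e i) (e j) + 1)) := by
        simp only [Finset.mem_product, Finset.mem_range]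
        omega
      have h1 := Finset.le_sup' (f := fun p : ℕ × ℕ => lam (g p.1 * g p.2)) hmem
      rw [hg i, hg j] at h1
      exact h1.trans (le_max_right _ _)
    rcases le_total (e i) (e j) with h | h
    · rw [max_eq_right h] at hleW
      calc lam (b i * b j) ≤ w j := hleW
        _ = 1 * w j := (one_mul _).symm
        _ ≤ w i * w j := mul_le_mul_of_nonneg_right (hw1 i) (hwpos j).le
    · rw [max_eq_left h] at hleW
      calc lam (b i * b j) ≤ w i := hleW
        _ = w i * 1 := (mul_one _).symm
        _ ≤ w i * w j := mul_le_mul_of_nonneg_left (hw1 j) (hwpos i).le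
  -- the new norm: weighted ℓ¹ norm in the basis `b`
  set lam' : (UniversalEnvelopingAlgebra ℝ L) → ℝ := fun x => ∑ i ∈ (b.repr x).support, |b.repr x i| * w i with hlamdef
  have hptw : ∀ (x : (UniversalEnvelopingAlgebra ℝ L)) (s : Finset (Module.Basis.ofVectorSpaceIndex ℝ (UniversalEnvelopingAlgebra ℝ L))),
      (b.repr x).support ⊆ s → lam' x = ∑ i ∈ s, |b.repr x i| * w i := by
    intro x s hs
    refine Finset.sum_subset hs fun i _ hi => ?_
    rw [Finsupp.notMem_support_iff.mp hi]
    simp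
  have htri : ∀ x y : (UniversalEnvelopingAlgebra ℝ L), lam' (x + y) ≤ lam' x + lam' y := by
    intro x y
    set s := (b.repr x).support ∪ (b.repr y).support with hs
    have hsx : (b.repr x).support ⊆ s := Finset.subset_union_left
    have hsy : (b.repr y).support ⊆ s := Finset.subset_union_right
    have hsxy : (b.repr (x + y)).support ⊆ s := by
      rw [map_add]
      exact Finsupp.support_add
    rw [hptw _ _ hsxy, hptw _ _ hsx, hptw _ _ hsy, ← Finset.sum_add_distrib]
    refine Finset.sum_le_sum fun i _ => ?_
    rw [map_add, Finsupp.add_apply, ← add_mul]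
    exact mul_le_mul_of_nonneg_right (abs_add_le _ _) (hwpos i).le
  have hsm : ∀ (c : ℝ) (x : (UniversalEnvelopingAlgebra ℝ L)), lam' (c • x) = |c| * lam' x := by
    intro c x
    have hsub : (b.repr (c • x)).support ⊆ (b.repr x).support := by
      rw [map_smul]
      exact Finsupp.support_smul
    rw [hptw _ _ hsub, Finset.mul_sum]
    refine Finset.sum_congr rfl fun i _ => ?_
    rw [map_smul, Finsupp.smul_apply, smul_eq_mul, abs_mul]
    ring
  have hp : ∀ x : (UniversalEnvelopingAlgebra ℝ L), x ≠ 0 → 0 < lam' x := by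
    intro x hx
    have h0 : b.repr x ≠ 0 := fun h => hx (by simpa using (b.repr.map_eq_zero_iff).mp h)
    obtain ⟨i, hi⟩ := Finsupp.ne_iff.mp h0
    rw [Finsupp.coe_zero, Pi.zero_apply] at hi
    refine Finset.sum_pos' (fun j _ => mul_nonneg (abs_nonneg _) (hwpos j).le)
      ⟨i, Finsupp.mem_support_iff.mpr hi, mul_pos (abs_pos.mpr hi) (hwpos i)⟩
  refine ⟨lam', ⟨htri, hsm, hp⟩, ?_⟩
  intro x y
  have hx : ∑ i ∈ (b.repr x).support, b.repr x i • b i = x := by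
    conv_rhs => rw [← b.linearCombination_repr x]
    rw [Finsupp.linearCombination_apply, Finsupp.sum]
  have hy : ∑ j ∈ (b.repr y).support, b.repr y j • b j = y := by
    conv_rhs => rw [← b.linearCombination_repr y]
    rw [Finsupp.linearCombination_apply, Finsupp.sum]
  have hxy : x * y = ∑ i ∈ (b.repr x).support, ∑ j ∈ (b.repr y).support,
      (b.repr x i * b.repr y j) • (b i * b j) := by
    conv_lhs => rw [← hx, ← hy]
    rw [Finset.sum_mul_sum]
    exact Finset.sum_congr rfl fun i _ => Finset.sum_congr rfl fun j _ => by
      rw [smul_mul_assoc, mul_smul_comm, smul_smul]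
  calc lam (x * y)
      = lam (∑ i ∈ (b.repr x).support, ∑ j ∈ (b.repr y).support,
          (b.repr x i * b.repr y j) • (b i * b j)) := by rw [hxy]
    _ ≤ ∑ i ∈ (b.repr x).support, lam (∑ j ∈ (b.repr y).support,
          (b.repr x i * b.repr y j) • (b i * b j)) := hlam'.sum_le _ _
    _ ≤ ∑ i ∈ (b.repr x).support, ∑ j ∈ (b.repr y).support,
          lam ((b.repr x i * b.repr y j) • (b i * b j)) :=
        Finset.sum_le_sum fun i _ => hlam'.sum_le _ _
    _ ≤ ∑ i ∈ (b.repr x).support, ∑ j ∈ (b.repr y).support,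
          (|b.repr x i| * w i) * (|b.repr y j| * w j) := by
        refine Finset.sum_le_sum fun i _ => Finset.sum_le_sum fun j _ => ?_
        rw [hsmul, abs_mul]
        calc |b.repr x i| * |b.repr y j| * lam (b i * b j)
            ≤ |b.repr x i| * |b.repr y j| * (w i * w j) :=
              mul_le_mul_of_nonneg_left (hkey i j)
                (mul_nonneg (abs_nonneg _) (abs_nonneg _))
          _ = (|b.repr x i| * w i) * (|b.repr y j| * w j) := by ring
    _ = lam' x * lam' y := (Finset.sum_mul_sum _ _ _ _).symm
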